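/- Under the stated hypotheses, suppose both I + R_x and I − R_x are invertible for all x in an open interval J. Then the scalar function V(x) = −C(exp(−xA)·(I − R_x²)⁻¹·exp(−xA)·b) is differentiable on J and satisfies the Riccati-type equation V′(x) = 2·a(x) + 2·V(x)², where a(x) = C(exp(−xA)·(I+R_x)⁻¹·A·(I+R_x)⁻¹·exp(−xA)·b). -/

import Mathlib

set_option synthInstance.maxHeartbeats 1000000
set_option maxHeartbeats 2000000
set_option linter.unusedVariables false
set_option linter.unreachableTactic false
set_option linter.unusedTactic false

open MeasureTheory

/-- The semigroup `exp(-tA)` generated by a bounded operator `A`. -/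
noncomputable def expA {H : Type*} [NormedAddCommGroup H] [InnerProductSpace ℂ H]
    [CompleteSpace H] (A : H →L[ℂ] H) (t : ℝ) : H →L[ℂ] H :=
  NormedSpace.exp ((-(t : ℂ)) • A)

/-- `R_x = ∫_x^∞ exp(-tA)·BC·exp(-tA) dt` as a Bochner integral. -/
noncomputable def Rop {H : Type*} [NormedAddCommGroup H] [InnerProductSpace ℂ H]
    [CompleteSpace H] (A : H →L[ℂ] H) (BC : H →L[ℂ] H) (x : ℝ) : H →L[ℂ] H :=
  ∫ t in Set.Ioi x, expA A t * BC * expA A t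

namespace RiccatiAux


variable {H : Type*} [NormedAddCommGroup H] [InnerProductSpace ℂ H] [CompleteSpace H]
variable (A : H →L[ℂ] H)

lemma hasDerivAt_expA (x : ℝ) : HasDerivAt (expA A) (-(expA A x * A)) x := by
  have h1 : HasDerivAt (fun z : ℂ => NormedSpace.exp (z • A))
      (NormedSpace.exp ((-(x : ℂ)) • A) * A) (-(x : ℂ)) :=
    hasDerivAt_exp_smul_const A (-(x : ℂ))
  have h2 : HasDerivAt (fun t : ℝ => -(t : ℂ)) (-1) x := by
    exact ((hasDerivAt_id x).ofReal_comp).neg.congr_deriv (by simp)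
  have h3 := h1.scomp x h2
  refine h3.congr_deriv ?_; simp [expA]

lemma hasDerivAt_expA' (x : ℝ) : HasDerivAt (expA A) (-(A * expA A x)) x := by
  have h1 : HasDerivAt (fun z : ℂ => NormedSpace.exp (z • A))
      (A * NormedSpace.exp ((-(x : ℂ)) • A)) (-(x : ℂ)) :=
    hasDerivAt_exp_smul_const' A (-(x : ℂ))
  have h2 : HasDerivAt (fun t : ℝ => -(t : ℂ)) (-1) x := by
    exact ((hasDerivAt_id x).ofReal_comp).neg.congr_deriv (by simp)
  have h3 := h1.scomp x h2
  refine h3.congr_deriv ?_; simp [expA]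

lemma continuous_expA : Continuous (expA A) :=
  continuous_iff_continuousAt.2 fun x => (hasDerivAt_expA A x).continuousAt

variable (BC : H →L[ℂ] H)

lemma g_cont : Continuous (fun t => expA A t * BC * expA A t) :=
  ((continuous_expA A).mul continuous_const).mul (continuous_expA A)

variable {M ε : ℝ}

lemma g_norm_le (hdecay : ∀ t : ℝ, 0 ≤ t → ‖expA A t‖ ≤ M * Real.exp (-ε * t))
    {t : ℝ} (ht : 0 ≤ t) :
    ‖expA A t * BC * expA A t‖ ≤ M * M * ‖BC‖ * Real.exp (-(2 * ε) * t) := by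
  have hE := hdecay t ht
  have hE0 : (0:ℝ) ≤ ‖expA A t‖ := norm_nonneg _
  have h1 : ‖expA A t * BC * expA A t‖ ≤ ‖expA A t‖ * ‖BC‖ * ‖expA A t‖ :=
    le_trans (norm_mul_le _ _)
      (mul_le_mul_of_nonneg_right (norm_mul_le _ _) (norm_nonneg _))
  have hexp : Real.exp (-ε * t) * Real.exp (-ε * t) = Real.exp (-(2 * ε) * t) := by
    rw [← Real.exp_add]; congr 1; ring
  have hM0 : (0:ℝ) ≤ M * Real.exp (-ε * t) := le_trans hE0 hE
  calc ‖expA A t * BC * expA A t‖ ≤ ‖expA A t‖ * ‖BC‖ * ‖expA A t‖ := h1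
    _ ≤ (M * Real.exp (-ε * t)) * ‖BC‖ * (M * Real.exp (-ε * t)) := by
        apply mul_le_mul (mul_le_mul_of_nonneg_right hE (norm_nonneg _)) hE hE0
        positivity
    _ = M * M * ‖BC‖ * Real.exp (-(2 * ε) * t) := by rw [← hexp]; ring

lemma g_integrableOn (hε : 0 < ε)
    (hdecay : ∀ t : ℝ, 0 ≤ t → ‖expA A t‖ ≤ M * Real.exp (-ε * t))
    {c : ℝ} (hc : 0 ≤ c) :
    IntegrableOn (fun t => expA A t * BC * expA A t) (Set.Ioi c) := by
  refine Integrable.mono'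
    ((exp_neg_integrableOn_Ioi c (b := 2 * ε) (by positivity)).const_mul (M * M * ‖BC‖))
    ((g_cont A BC).aestronglyMeasurable) ?_
  filter_upwards [ae_restrict_mem measurableSet_Ioi] with t ht
  have ht0 : (0:ℝ) ≤ t := le_trans hc (le_of_lt ht)
  simpa [neg_mul, mul_assoc] using g_norm_le A BC hdecay ht0

lemma g_tendsto (hε : 0 < ε)
    (hdecay : ∀ t : ℝ, 0 ≤ t → ‖expA A t‖ ≤ M * Real.exp (-ε * t)) :
    Filter.Tendsto (fun t => expA A t * BC * expA A t) Filter.atTop (nhds 0) := by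
  apply squeeze_zero_norm' (a := fun t => M * M * ‖BC‖ * Real.exp (-(2 * ε) * t))
  · filter_upwards [Filter.eventually_ge_atTop (0:ℝ)] with t ht
    exact g_norm_le A BC hdecay ht
  · have h1 : Filter.Tendsto (fun t : ℝ => -(2 * ε) * t) Filter.atTop Filter.atBot := by
      apply Filter.Tendsto.const_mul_atTop_of_neg (by linarith) Filter.tendsto_id
    have h2 := (Real.tendsto_exp_atBot).comp h1
    simpa using h2.const_mul (M * M * ‖BC‖)


lemma g_hasDerivAt (t : ℝ) :
    HasDerivAt (fun s => expA A s * BC * expA A s)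
      (-(A * (expA A t * BC * expA A t) + (expA A t * BC * expA A t) * A)) t := by
  have h := ((hasDerivAt_expA' A t).mul_const BC).mul (hasDerivAt_expA A t)
  exact h.congr_deriv (by noncomm_ring)

lemma AR_add_RA (hε : 0 < ε)
    (hdecay : ∀ t : ℝ, 0 ≤ t → ‖expA A t‖ ≤ M * Real.exp (-ε * t))
    {x : ℝ} (hx : 0 < x) :
    A * Rop A BC x + Rop A BC x * A = expA A x * BC * expA A x := by
  have hint : IntegrableOn (fun t => expA A t * BC * expA A t) (Set.Ioi x) :=
    g_integrableOn A BC hε hdecay hx.le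
  have h1 : IntegrableOn (fun t => A * (expA A t * BC * expA A t)) (Set.Ioi x) :=
    (ContinuousLinearMap.mul ℂ (H →L[ℂ] H) A).integrable_comp hint
  have h2 : IntegrableOn (fun t => (expA A t * BC * expA A t) * A) (Set.Ioi x) :=
    ((ContinuousLinearMap.mul ℂ (H →L[ℂ] H)).flip A).integrable_comp hint
  have key := integral_Ioi_of_hasDerivAt_of_tendsto
    (f := fun t => expA A t * BC * expA A t)
    (f' := fun t => -(A * (expA A t * BC * expA A t) + (expA A t * BC * expA A t) * A))
    ((g_cont A BC).continuousWithinAt)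
    (fun t _ => g_hasDerivAt A BC t) (by exact (h1.add h2).neg)
    (g_tendsto A BC hε hdecay)
  rw [integral_neg, integral_add h1 h2] at key
  have e1 : ∫ t in Set.Ioi x, A * (expA A t * BC * expA A t) = A * Rop A BC x := by
    simpa [Rop] using (ContinuousLinearMap.mul ℂ (H →L[ℂ] H) A).integral_comp_comm hint
  have e2 : ∫ t in Set.Ioi x, (expA A t * BC * expA A t) * A = Rop A BC x * A := by
    simpa [Rop] using ((ContinuousLinearMap.mul ℂ (H →L[ℂ] H)).flip A).integral_comp_comm hint
  rw [e1, e2, zero_sub] at key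
  exact neg_injective key

lemma hasDerivAt_Rop (hε : 0 < ε)
    (hdecay : ∀ t : ℝ, 0 ≤ t → ‖expA A t‖ ≤ M * Real.exp (-ε * t))
    {x : ℝ} (hx : 0 < x) :
    HasDerivAt (Rop A BC) (-(expA A x * BC * expA A x)) x := by
  set c : ℝ := x / 2 with hc_def
  have hc0 : 0 < c := by positivity
  have hcx : c < x := by rw [hc_def]; linarith
  have heq : ∀ y ∈ Set.Ioi c, Rop A BC y
      = Rop A BC c - ∫ t in c..y, expA A t * BC * expA A t := by
    intro y hy
    have hcy : c ≤ y := le_of_lt hy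
    have hsplit : Rop A BC c
        = (∫ t in Set.Ioc c y, expA A t * BC * expA A t) + Rop A BC y := by
      rw [Rop, show Set.Ioi c = Set.Ioc c y ∪ Set.Ioi y from
          (Set.Ioc_union_Ioi_eq_Ioi hcy).symm,
        setIntegral_union (Set.Ioc_disjoint_Ioi le_rfl) measurableSet_Ioi
          ((g_integrableOn A BC hε hdecay hc0.le).mono_set Set.Ioc_subset_Ioi_self)
          (g_integrableOn A BC hε hdecay (le_trans hc0.le hcy))]
      rfl
    rw [intervalIntegral.integral_of_le hcy, hsplit]
    abel
  have hd : HasDerivAt (fun y => Rop A BC c - ∫ t in c..y, expA A t * BC * expA A t)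
      (-(expA A x * BC * expA A x)) x := by
    exact HasDerivAt.const_sub _
      (intervalIntegral.integral_hasDerivAt_right
        ((g_cont A BC).intervalIntegrable c x)
        ((g_cont A BC).stronglyMeasurableAtFilter _ _)
        ((g_cont A BC).continuousAt))
  exact hd.congr_of_eventuallyEq
    (Filter.eventuallyEq_of_mem (isOpen_Ioi.mem_nhds hcx) heq)


end RiccatiAux

/-- With the rank-one operator `BC : v ↦ C(v)·b` and `R_x` as above, if both `I + R_x` and
`I − R_x` are invertible for all `x` in an open interval `J`, then
`V(x) = −C(exp(−xA)·(I − R_x²)⁻¹·exp(−xA)·b)` is differentiable on `J` and satisfies the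
Riccati-type equation `V′(x) = 2·a(x) + 2·V(x)²`, where
`a(x) = C(exp(−xA)·(I+R_x)⁻¹·A·(I+R_x)⁻¹·exp(−xA)·b)`. -/
theorem riccati_equation_for_V
    {H : Type*} [NormedAddCommGroup H] [InnerProductSpace ℂ H] [CompleteSpace H]
    (A : H →L[ℂ] H) (b : H) (C : H →L[ℂ] ℂ)
    (M ε : ℝ) (hM : 0 < M) (hε : 0 < ε)
    (hdecay : ∀ t : ℝ, 0 ≤ t → ‖expA A t‖ ≤ M * Real.exp (-ε * t))
    (J : Set ℝ) (hJopen : IsOpen J) (hJsub : J ⊆ Set.Ioi (0 : ℝ))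
    (hinvp : ∀ x ∈ J, IsUnit (1 + Rop A (C.smulRight b) x))
    (hinvm : ∀ x ∈ J, IsUnit (1 - Rop A (C.smulRight b) x))
    (V : ℝ → ℂ)
    (hV : ∀ x : ℝ, V x = -(C ((expA A x *
      Ring.inverse (1 - Rop A (C.smulRight b) x * Rop A (C.smulRight b) x) *
      expA A x) b)))
    (a : ℝ → ℂ)
    (ha : ∀ x : ℝ, a x = C ((expA A x *
      Ring.inverse (1 + Rop A (C.smulRight b) x) * A *
      Ring.inverse (1 + Rop A (C.smulRight b) x) * expA A x) b)) :
    ∀ x ∈ J, HasDerivAt V (2 * a x + 2 * (V x) ^ 2) x := by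
  intro x hx
  have hx0 : (0:ℝ) < x := hJsub hx
  set BC : H →L[ℂ] H := C.smulRight b with hBC_def
  set E : H →L[ℂ] H := expA A x with hE_def
  set R : H →L[ℂ] H := Rop A BC x with hR_def
  set K : H →L[ℂ] H := E * BC * E with hK_def
  have hup := hinvp x hx
  have hum := hinvm x hx
  have hU : IsUnit (1 - R * R) := by
    have h := hum.mul hup
    rwa [show (1 - R) * (1 + R) = 1 - R * R by noncomm_ring] at h
  set S : H →L[ℂ] H := Ring.inverse (1 - R * R) with hS_def
  set P : H →L[ℂ] H := Ring.inverse (1 + R) with hP_def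
  have fS1 : S * (1 - R * R) = 1 := Ring.inverse_mul_cancel _ hU
  have fS2 : (1 - R * R) * S = 1 := Ring.mul_inverse_cancel _ hU
  have fP1 : P * (1 + R) = 1 := Ring.inverse_mul_cancel _ hup
  have fP2 : (1 + R) * P = 1 := Ring.mul_inverse_cancel _ hup
  have hAR : A * R + R * A = K := RiccatiAux.AR_add_RA A BC hε hdecay hx0
  have hEA : A * E = E * A := by
    have h : Commute ((-(x:ℂ)) • A) A := (Commute.refl A).smul_left _
    exact (h.exp_left).eq.symm
  -- derivative of R
  have hR' : HasDerivAt (Rop A BC) (-K) x := by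
    have h := RiccatiAux.hasDerivAt_Rop A BC hε hdecay hx0
    rwa [← hE_def, ← hK_def] at h
  -- derivative of 1 - R·R
  have hW : HasDerivAt (fun y => 1 - Rop A BC y * Rop A BC y) (K * R + R * K) x := by
    have h := (hasDerivAt_const x (1 : H →L[ℂ] H)).sub (hR'.mul hR')
    refine h.congr_deriv ?_
    rw [← hR_def]
    noncomm_ring
  -- derivative of S
  have hSinv : ((hU.unit⁻¹ : (H →L[ℂ] H)ˣ) : H →L[ℂ] H) = S := by
    rw [← Ring.inverse_unit, IsUnit.unit_spec]
  have hfd : HasFDerivAt Ring.inverse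
      (-(ContinuousLinearMap.mulLeftRight ℂ (H →L[ℂ] H) S S)) (1 - R * R) := by
    have h := hasFDerivAt_ringInverse (𝕜 := ℂ) hU.unit
    rwa [hSinv, IsUnit.unit_spec] at h
  have hSd : HasDerivAt (fun y => Ring.inverse (1 - Rop A BC y * Rop A BC y))
      (-(S * (K * R + R * K) * S)) x := by
    have h := (hfd.restrictScalars ℝ).comp_hasDerivAt x hW
    exact h
  -- derivative of E
  have hE' : HasDerivAt (expA A) (-(A * E)) x := by
    have h := RiccatiAux.hasDerivAt_expA' A x
    rwa [← hE_def] at h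
  have hE2 : HasDerivAt (expA A) (-(E * A)) x := by
    have h := RiccatiAux.hasDerivAt_expA A x
    rwa [← hE_def] at h
  -- derivative of T = E·S·E
  have hT : HasDerivAt
      (fun y => expA A y * Ring.inverse (1 - Rop A BC y * Rop A BC y) * expA A y)
      (((-(A * E)) * S + E * (-(S * (K * R + R * K) * S))) * E
        + (E * S) * (-(E * A))) x := by
    have h := (hE'.mul hSd).mul hE2
    refine h.congr_deriv ?_; simp only [Pi.mul_apply]; rw [← hE_def, ← hR_def, ← hS_def]
  -- derivative of V
  have hTb := ((ContinuousLinearMap.apply ℂ H b).hasFDerivAt.restrictScalars ℝ).comp_hasDerivAt x hT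
  have hVC := ((C.hasFDerivAt.restrictScalars ℝ).comp_hasDerivAt x hTb).neg
  have hVd : HasDerivAt V
      (-(C (((((-(A * E)) * S + E * (-(S * (K * R + R * K) * S))) * E
        + (E * S) * (-(E * A))) : H →L[ℂ] H) b))) x := by
    refine HasDerivAt.congr_of_eventuallyEq ?_ (Filter.Eventually.of_forall fun y => hV y)
    refine hVC.congr_deriv ?_; simp [ContinuousLinearMap.apply_apply, Function.comp]
  have veq : V x = -(C ((E * S * E) b)) := by
    rw [hV x, ← hE_def, ← hR_def, ← hS_def]
  have aeq : a x = C ((E * (P * A * P) * E) b) := by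
    rw [ha x, ← hE_def, ← hR_def, ← hP_def,
      show E * P * A * P * E = E * (P * A * P) * E by noncomm_ring]
  -- the operator algebra
  have hop : (((-(A * E)) * S + E * (-(S * (K * R + R * K) * S))) * E
        + (E * S) * (-(E * A)))
      = -(A * (E * S * E) + (E * S * E) * A + E * (S * (K * R + R * K) * S) * E) := by
    noncomm_ring
  have h3 : A * S = S * ((1 - R * R) * A) * S := by
    rw [show S * ((1 - R * R) * A) * S = (S * (1 - R * R)) * (A * S) by noncomm_ring,
      fS1, one_mul]
  have h4 : S * A = S * (A * (1 - R * R)) * S := by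
    rw [show S * (A * (1 - R * R)) * S = (S * A) * ((1 - R * R) * S) by noncomm_ring,
      fS2, mul_one]
  have h6 : S * (1 - R) = P := by
    have e1 : S * (1 - R) * (1 + R) = 1 := by
      rw [mul_assoc, show (1 - R) * (1 + R) = 1 - R * R by noncomm_ring, fS1]
    calc S * (1 - R) = S * (1 - R) * ((1 + R) * P) := by rw [fP2, mul_one]
      _ = (S * (1 - R) * (1 + R)) * P := by rw [← mul_assoc]
      _ = P := by rw [e1, one_mul]
  have h7 : (1 - R) * S = P := by
    have e1 : (1 + R) * ((1 - R) * S) = 1 := by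
      rw [← mul_assoc, show (1 + R) * (1 - R) = 1 - R * R by noncomm_ring, fS2]
    calc (1 - R) * S = (P * (1 + R)) * ((1 - R) * S) := by rw [fP1, one_mul]
      _ = P * ((1 + R) * ((1 - R) * S)) := by rw [mul_assoc]
      _ = P := by rw [e1, mul_one]
  have hz : A * R + R * A - K = 0 := sub_eq_zero_of_eq hAR
  have h5 : (1 - R * R) * A + A * (1 - R * R) + (K * R + R * K)
      = ((1 - R) * A * (1 - R) + (1 - R) * A * (1 - R)) + (K + K) := by
    have key : ((1 - R * R) * A + A * (1 - R * R) + (K * R + R * K))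
        - (((1 - R) * A * (1 - R) + (1 - R) * A * (1 - R)) + (K + K))
        = -(R * (A * R + R * A - K) + (A * R + R * A - K) * R)
          + (A * R + R * A - K) + (A * R + R * A - K) := by noncomm_ring
    rw [hz] at key
    simp only [mul_zero, zero_mul, add_zero, neg_zero, zero_add] at key
    exact sub_eq_zero.mp key
  have h8 : S * ((1 - R) * A * (1 - R)) * S = P * A * P := by
    rw [show S * ((1 - R) * A * (1 - R)) * S = (S * (1 - R)) * A * ((1 - R) * S)
      by noncomm_ring, h6, h7]
  have h1o : A * (E * S * E) = E * (A * S) * E := by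
    rw [show A * (E * S * E) = (A * E) * (S * E) by noncomm_ring, hEA,
      show (E * A) * (S * E) = E * (A * S) * E by noncomm_ring]
  have h2o : (E * S * E) * A = E * (S * A) * E := by
    rw [show (E * S * E) * A = (E * S) * (E * A) by noncomm_ring, ← hEA,
      show (E * S) * (A * E) = E * (S * A) * E by noncomm_ring]
  have hkey : A * (E * S * E) + (E * S * E) * A + E * (S * (K * R + R * K) * S) * E
      = (E * (P * A * P) * E + E * (P * A * P) * E)
        + (E * (S * K * S) * E + E * (S * K * S) * E) := by
    rw [h1o, h2o, h3, h4]
    rw [show E * (S * ((1 - R * R) * A) * S) * E + E * (S * (A * (1 - R * R)) * S) * E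
          + E * (S * (K * R + R * K) * S) * E
        = E * (S * ((1 - R * R) * A + A * (1 - R * R) + (K * R + R * K)) * S) * E
        by noncomm_ring]
    rw [h5]
    rw [show E * (S * (((1 - R) * A * (1 - R) + (1 - R) * A * (1 - R)) + (K + K)) * S) * E
        = (E * (S * ((1 - R) * A * (1 - R)) * S) * E + E * (S * ((1 - R) * A * (1 - R)) * S) * E)
          + (E * (S * K * S) * E + E * (S * K * S) * E) by noncomm_ring]
    rw [h8]
  have rank1 : ∀ X Y : H →L[ℂ] H, C ((X * BC * Y) b) = C (Y b) * C (X b) := by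
    intro X Y
    rw [hBC_def]
    simp only [ContinuousLinearMap.mul_apply, ContinuousLinearMap.smulRight_apply,
      _root_.map_smul, smul_eq_mul]
  have hSKS : E * (S * K * S) * E = (E * S * E) * BC * (E * S * E) := by
    rw [hK_def]; noncomm_ring
  have final : 2 * a x + 2 * V x ^ 2
      = -(C (((((-(A * E)) * S + E * (-(S * (K * R + R * K) * S))) * E
        + (E * S) * (-(E * A))) : H →L[ℂ] H) b)) := by
    calc 2 * a x + 2 * V x ^ 2
        = (C ((E * (P * A * P) * E) b) + C ((E * (P * A * P) * E) b))
          + (C ((E * (S * K * S) * E) b) + C ((E * (S * K * S) * E) b)) := by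
          rw [aeq, veq, hSKS, rank1]
          ring
      _ = C (((E * (P * A * P) * E + E * (P * A * P) * E)
            + (E * (S * K * S) * E + E * (S * K * S) * E) : H →L[ℂ] H) b) := by
          simp only [ContinuousLinearMap.add_apply, map_add]
      _ = C ((A * (E * S * E) + (E * S * E) * A
            + E * (S * (K * R + R * K) * S) * E : H →L[ℂ] H) b) := by rw [hkey]
      _ = -(C (((((-(A * E)) * S + E * (-(S * (K * R + R * K) * S))) * E
            + (E * S) * (-(E * A))) : H →L[ℂ] H) b)) := by
          rw [hop]
          simp only [ContinuousLinearMap.neg_apply, map_neg, neg_neg]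
  rw [final]
  exact hVd
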